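/- Let f : ℍ^{N×S} → ℝ be ℝ-differentiable at Q. Then for every H ∈ ℍ^{N×S}, |Df(Q)[H]| ≤ 4 · (Σ_{n,s} |(∂f/∂q_{ns})(Q)|²)^{1/2} · (Σ_{n,s} |H_{ns}|²)^{1/2}, where Df(Q)[H] is the real Fréchet derivative of f at Q applied to H; moreover equality holds for the direction H with entries H_{ns} = ((∂f/∂q_{ns})(Q))^{*}, in which case Df(Q)[H] = 4 · Σ_{n,s} |(∂f/∂q_{ns})(Q)|². Thus the conjugate gradient ((∂f/∂Q)(Q))^{*} gives the direction of the maximum rate of change of f. -/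

import Mathlib

open scoped Quaternion

noncomputable section

/-- The imaginary unit `i` of the quaternions. -/
def qI : ℍ[ℝ] := ⟨0, 1, 0, 0⟩
/-- The imaginary unit `j` of the quaternions. -/
def qJ : ℍ[ℝ] := ⟨0, 0, 1, 0⟩
/-- The imaginary unit `k` of the quaternions. -/
def qK : ℍ[ℝ] := ⟨0, 0, 0, 1⟩

/-- The `N × S` quaternion matrix with entry `d` at position `(n,s)` and `0` elsewhere. -/
def single {N S : ℕ} (n : Fin N) (s : Fin S) (d : ℍ[ℝ]) : Fin N → Fin S → ℍ[ℝ] :=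
  Pi.single n (Pi.single s d)

/-- Real directional (Fréchet) derivative of a real-valued function of a matrix variable, in
the direction `d` at the single entry `(n,s)` (the other entries held fixed). -/
def pdR {N S : ℕ} (f : (Fin N → Fin S → ℍ[ℝ]) → ℝ) (Q : Fin N → Fin S → ℍ[ℝ])
    (n : Fin N) (s : Fin S) (d : ℍ[ℝ]) : ℝ :=
  fderiv ℝ f Q (single n s d)

/-- Left GHR derivative `∂f/∂q_{ns}^ν` of a real-valued function `f` with respect to the entry
`q_{ns}`: `¼(∂f/∂q_a − (∂f/∂q_b) i^ν − (∂f/∂q_c) j^ν − (∂f/∂q_d) k^ν)`, `x^ν = ν x ν⁻¹`. -/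
def ghrER {N S : ℕ} (ν : ℍ[ℝ]) (f : (Fin N → Fin S → ℍ[ℝ]) → ℝ)
    (Q : Fin N → Fin S → ℍ[ℝ]) (n : Fin N) (s : Fin S) : ℍ[ℝ] :=
  (1 / 4 : ℝ) • ((pdR f Q n s 1) • (1 : ℍ[ℝ]) - (pdR f Q n s qI) • (ν * qI * ν⁻¹)
    - (pdR f Q n s qJ) • (ν * qJ * ν⁻¹) - (pdR f Q n s qK) • (ν * qK * ν⁻¹))

/-- Conjugate left GHR derivative `∂f/∂q_{ns}^{ν*}` of a real-valued function `f`. -/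
def ghrStarER {N S : ℕ} (ν : ℍ[ℝ]) (f : (Fin N → Fin S → ℍ[ℝ]) → ℝ)
    (Q : Fin N → Fin S → ℍ[ℝ]) (n : Fin N) (s : Fin S) : ℍ[ℝ] :=
  (1 / 4 : ℝ) • ((pdR f Q n s 1) • (1 : ℍ[ℝ]) + (pdR f Q n s qI) • (ν * qI * ν⁻¹)
    + (pdR f Q n s qJ) • (ν * qJ * ν⁻¹) + (pdR f Q n s qK) • (ν * qK * ν⁻¹))


/-- **Direction of maximum rate of change** (Theorem 4): for a real-valued
`f : ℍ^{N×S} → ℝ` differentiable at `Q` and any direction `H`,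
`|Df(Q)[H]| ≤ 4 (Σ|∂f/∂q_{ns}|²)^{1/2} (Σ|H_{ns}|²)^{1/2}`, with equality in the direction
`H_{ns} = (∂f/∂q_{ns})*`, for which `Df(Q)[H] = 4 Σ|∂f/∂q_{ns}|²`; thus the conjugate
gradient gives the direction of maximum rate of change. -/
theorem max_rate_of_change {N S : ℕ}
    (f : (Fin N → Fin S → ℍ[ℝ]) → ℝ) (Q : Fin N → Fin S → ℍ[ℝ])
    (hf : DifferentiableAt ℝ f Q) :
    (∀ H : Fin N → Fin S → ℍ[ℝ],
      |fderiv ℝ f Q H| ≤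
        4 * Real.sqrt (∑ n, ∑ s, ‖ghrER (1 : ℍ[ℝ]) f Q n s‖ ^ 2)
          * Real.sqrt (∑ n, ∑ s, ‖H n s‖ ^ 2))
    ∧ fderiv ℝ f Q (fun n s => star (ghrER (1 : ℍ[ℝ]) f Q n s)) =
        4 * ∑ n, ∑ s, ‖ghrER (1 : ℍ[ℝ]) f Q n s‖ ^ 2 := by
  classical
  set A : Fin N → Fin S → ℝ := fun n s => pdR f Q n s 1 with hA
  set B : Fin N → Fin S → ℝ := fun n s => pdR f Q n s qI with hB
  set C : Fin N → Fin S → ℝ := fun n s => pdR f Q n s qJ with hC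
  set D : Fin N → Fin S → ℝ := fun n s => pdR f Q n s qK with hD
  -- directional derivative of a single entry in terms of components
  have key : ∀ (n : Fin N) (s : Fin S) (d : ℍ[ℝ]),
      fderiv ℝ f Q (single n s d)
        = d.re * A n s + d.imI * B n s + d.imJ * C n s + d.imK * D n s := by
    intro n s d
    have hd : d = d.re • (1:ℍ[ℝ]) + d.imI • qI + d.imJ • qJ + d.imK • qK := by
      ext <;> simp <;> simp [qI, qJ, qK]
    have h1 : single n s d = d.re • single n s 1 + d.imI • single n s qI
        + d.imJ • single n s qJ + d.imK • single n s qK := by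
      simp only [single, ← Pi.single_smul, ← Pi.single_add, ← hd]
    rw [h1, map_add, map_add, map_add, map_smul, map_smul, map_smul, map_smul]
    simp [hA, hB, hC, hD, pdR, smul_eq_mul]
  -- decomposition of any H as a sum of singles
  have hHsum : ∀ H : Fin N → Fin S → ℍ[ℝ], H = ∑ n, ∑ s, single n s (H n s) := by
    intro H; funext n s
    simp [single, Finset.sum_apply, Pi.single_apply, apply_ite (fun g : Fin S → ℍ[ℝ] => g s)]
  have hLH : ∀ H : Fin N → Fin S → ℍ[ℝ],
      fderiv ℝ f Q H = ∑ n, ∑ s, ((H n s).re * A n s + (H n s).imI * B n s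
        + (H n s).imJ * C n s + (H n s).imK * D n s) := by
    intro H
    conv_lhs => rw [hHsum H]
    rw [map_sum]
    exact Finset.sum_congr rfl fun n _ => by
      rw [map_sum]; exact Finset.sum_congr rfl fun s _ => key n s _
  -- components of the GHR derivative
  have hg : ∀ (n : Fin N) (s : Fin S),
      ghrER (1 : ℍ[ℝ]) f Q n s
        = ⟨A n s / 4, -(B n s) / 4, -(C n s) / 4, -(D n s) / 4⟩ := by
    intro n s
    ext <;> simp [ghrER, hA, hB, hC, hD] <;> simp [qI, qJ, qK] <;> ring
  have hgnorm : ∀ (n : Fin N) (s : Fin S),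
      ‖ghrER (1 : ℍ[ℝ]) f Q n s‖ ^ 2
        = (A n s ^ 2 + B n s ^ 2 + C n s ^ 2 + D n s ^ 2) / 16 := by
    intro n s
    rw [sq, ← Quaternion.normSq_eq_norm_mul_self, Quaternion.normSq_def', hg]
    simp; ring
  have hHnorm : ∀ (H : Fin N → Fin S → ℍ[ℝ]) (n : Fin N) (s : Fin S),
      ‖H n s‖ ^ 2 = (H n s).re ^ 2 + (H n s).imI ^ 2 + (H n s).imJ ^ 2 + (H n s).imK ^ 2 := by
    intro H n s
    rw [sq, ← Quaternion.normSq_eq_norm_mul_self, Quaternion.normSq_def']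
  have hsum16 : (∑ n, ∑ s, ‖ghrER (1 : ℍ[ℝ]) f Q n s‖ ^ 2)
      = (∑ n, ∑ s, (A n s ^ 2 + B n s ^ 2 + C n s ^ 2 + D n s ^ 2)) / 16 := by
    simp_rw [hgnorm, ← Finset.sum_div]
  set T : ℝ := ∑ n, ∑ s, (A n s ^ 2 + B n s ^ 2 + C n s ^ 2 + D n s ^ 2) with hT
  have hTnonneg : 0 ≤ T := Finset.sum_nonneg fun n _ => Finset.sum_nonneg fun s _ => by positivity
  have hsqrtT : 4 * Real.sqrt (∑ n, ∑ s, ‖ghrER (1 : ℍ[ℝ]) f Q n s‖ ^ 2) = Real.sqrt T := by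
    rw [hsum16, show T / 16 = T * (1/4 : ℝ)^2 by ring, Real.sqrt_mul hTnonneg,
      Real.sqrt_sq (by norm_num : (0:ℝ) ≤ (1/4:ℝ))]
    ring
  constructor
  · intro H
    -- Cauchy–Schwarz over the flattened index set
    set u : Fin N × Fin S × Fin 4 → ℝ :=
      fun p => ![A p.1 p.2.1, B p.1 p.2.1, C p.1 p.2.1, D p.1 p.2.1] p.2.2 with hu
    set v : Fin N × Fin S × Fin 4 → ℝ :=
      fun p => ![(H p.1 p.2.1).re, (H p.1 p.2.1).imI, (H p.1 p.2.1).imJ, (H p.1 p.2.1).imK] p.2.2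
      with hv
    have huv : ∑ p, u p * v p = fderiv ℝ f Q H := by
      rw [hLH H, Fintype.sum_prod_type]
      refine Finset.sum_congr rfl fun n _ => ?_
      rw [Fintype.sum_prod_type]
      refine Finset.sum_congr rfl fun s _ => ?_
      simp [hu, hv, Fin.sum_univ_four]; ring
    have hu2 : ∑ p, u p ^ 2 = T := by
      rw [hT, Fintype.sum_prod_type]
      refine Finset.sum_congr rfl fun n _ => ?_
      rw [Fintype.sum_prod_type]
      refine Finset.sum_congr rfl fun s _ => ?_
      simp [hu, Fin.sum_univ_four]
    have hv2 : ∑ p, v p ^ 2 = ∑ n, ∑ s, ‖H n s‖ ^ 2 := by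
      rw [Fintype.sum_prod_type]
      refine Finset.sum_congr rfl fun n _ => ?_
      rw [Fintype.sum_prod_type]
      refine Finset.sum_congr rfl fun s _ => ?_
      rw [hHnorm H n s]
      simp [hv, Fin.sum_univ_four]
    have cs := Finset.sum_mul_sq_le_sq_mul_sq Finset.univ u v
    rw [hu2, hv2, huv] at cs
    have habs : |fderiv ℝ f Q H| ≤ Real.sqrt (T * ∑ n, ∑ s, ‖H n s‖ ^ 2) := by
      rw [← Real.sqrt_sq_eq_abs]
      exact Real.sqrt_le_sqrt cs
    rw [hsqrtT, ← Real.sqrt_mul hTnonneg]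
    exact habs
  · rw [hLH]
    rw [Finset.mul_sum]
    refine Finset.sum_congr rfl fun n _ => ?_
    rw [Finset.mul_sum]
    refine Finset.sum_congr rfl fun s _ => ?_
    rw [hgnorm n s]
    simp only [Quaternion.re_star, Quaternion.imI_star, Quaternion.imJ_star, Quaternion.imK_star]
    rw [hg n s]
    simp; ring
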